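/- Let E : (Ω → [0,∞]) → [0,∞] be a functional that is monotone (X ≤ Y pointwise implies E(X) ≤ E(Y)), countably subadditive (E(∑_n X_n) ≤ ∑_n E(X_n) for nonnegative X_n), positively homogeneous, and satisfies E(λ) ≤ λ for constants λ ≥ 0. Then E satisfies the Cauchy–Schwarz inequality: for all X, Y : Ω → [-∞,∞], E(|X|·|Y|) ≤ E(X²)^{1/2} · E(Y²)^{1/2}, with the conventions 0·∞ = 0 and ∞ - ∞ = ∞. -/

import Mathlib

open scoped ENNReal NNReal


lemma amgm_ennreal (t x y : ℝ≥0∞) (ht0 : t ≠ 0) (htt : t ≠ ∞) :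
    x * y ≤ 2⁻¹ * t * x ^ 2 + 2⁻¹ * t⁻¹ * y ^ 2 := by
  rcases eq_or_ne x ∞ with hx | hx
  · rcases eq_or_ne y 0 with hy | hy
    · simp [hy]
    · have h2t : (2:ℝ≥0∞)⁻¹ * t ≠ 0 := by simp [mul_eq_zero, ht0]
      have h1 : 2⁻¹ * t * x ^ 2 = ∞ := by
        rw [hx, pow_two, ENNReal.top_mul_top, ENNReal.mul_top h2t]
      simp [h1]
  · rcases eq_or_ne y ∞ with hy | hy
    · rcases eq_or_ne x 0 with hx0 | hx0
      · simp [hx0]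
      · have h2t : (2:ℝ≥0∞)⁻¹ * t⁻¹ ≠ 0 := by
          simp [mul_eq_zero, ENNReal.inv_ne_zero, htt]
        have h1 : 2⁻¹ * t⁻¹ * y ^ 2 = ∞ := by
          rw [hy, pow_two, ENNReal.top_mul_top, ENNReal.mul_top h2t]
        simp [h1]
    · lift x to ℝ≥0 using hx
      lift y to ℝ≥0 using hy
      lift t to ℝ≥0 using htt
      have ht0' : (0:ℝ) < (t:ℝ) := by
        have : t ≠ 0 := by exact_mod_cast ht0
        positivity
      have key : (x:ℝ) * y ≤ 2⁻¹ * t * x ^ 2 + 2⁻¹ * (t:ℝ)⁻¹ * y ^ 2 := by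
        rw [← sub_nonneg]
        have h : 2⁻¹ * (t:ℝ) * x ^ 2 + 2⁻¹ * (t:ℝ)⁻¹ * y ^ 2 - x * y
            = (2 * t)⁻¹ * ((t:ℝ) * x - y) ^ 2 := by
          push_cast
          generalize (t:ℝ) = T at ht0' ⊢
          generalize (x:ℝ) = X
          generalize (y:ℝ) = Y
          have htne : T ≠ 0 := ht0'.ne'
          field_simp
          ring
        rw [h]
        positivity
      have keyn : (x * y : ℝ≥0) ≤ 2⁻¹ * t * x ^ 2 + 2⁻¹ * t⁻¹ * y ^ 2 := by
        rw [← NNReal.coe_le_coe]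
        push_cast
        exact key
      calc (x:ℝ≥0∞) * y = ((x * y : ℝ≥0) : ℝ≥0∞) := by push_cast; ring
        _ ≤ ((2⁻¹ * t * x ^ 2 + 2⁻¹ * t⁻¹ * y ^ 2 : ℝ≥0) : ℝ≥0∞) :=
            ENNReal.coe_le_coe.mpr keyn
        _ = 2⁻¹ * (t:ℝ≥0∞) * (x:ℝ≥0∞) ^ 2 + 2⁻¹ * (t:ℝ≥0∞)⁻¹ * (y:ℝ≥0∞) ^ 2 := by
            push_cast [ENNReal.coe_inv (show t ≠ 0 by exact_mod_cast ht0),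
              ENNReal.coe_inv (two_ne_zero)]
            ring

lemma Ezero {Ω : Type*} (E : (Ω → ℝ≥0∞) → ℝ≥0∞)
    (hmono : ∀ X Y : Ω → ℝ≥0∞, (∀ ω, X ω ≤ Y ω) → E X ≤ E Y)
    (hcsub : ∀ X : ℕ → Ω → ℝ≥0∞, E (fun ω => ∑' n, X n ω) ≤ ∑' n, E (X n))
    (f g : Ω → ℝ≥0∞) (hf : E (fun ω => f ω ^ 2) = 0) :
    E (fun ω => f ω * g ω) = 0 := by
  have hpt : ∀ ω, f ω * g ω ≤ ∑' _ : ℕ, f ω ^ 2 := by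
    intro ω
    rcases eq_or_ne (f ω) 0 with h | h
    · simp [h]
    · have : ∑' _ : ℕ, f ω ^ 2 = ∞ := ENNReal.tsum_const_eq_top_of_ne_zero (by
        simpa [pow_eq_zero_iff] using h)
      simp [this]
  have h1 : E (fun ω => f ω * g ω) ≤ E (fun ω => ∑' _ : ℕ, f ω ^ 2) :=
    hmono _ _ hpt
  have h2 := hcsub (fun _ ω => f ω ^ 2)
  have h3 : ∑' _ : ℕ, E (fun ω => f ω ^ 2) = 0 := by simp [hf]
  exact le_antisymm (h1.trans (h2.trans_eq h3)) zero_le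

lemma cs_key {Ω : Type*} (E : (Ω → ℝ≥0∞) → ℝ≥0∞)
    (hmono : ∀ X Y : Ω → ℝ≥0∞, (∀ ω, X ω ≤ Y ω) → E X ≤ E Y)
    (hcsub : ∀ X : ℕ → Ω → ℝ≥0∞, E (fun ω => ∑' n, X n ω) ≤ ∑' n, E (X n))
    (hhom : ∀ (c : ℝ≥0∞), 0 < c → c ≠ ∞ → ∀ X : Ω → ℝ≥0∞,
      E (fun ω => c * X ω) = c * E X)
    (hconst : ∀ c : ℝ≥0∞, E (fun _ => c) ≤ c)
    (f g : Ω → ℝ≥0∞) :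
    E (fun ω => f ω * g ω) ≤
      (E (fun ω => f ω ^ 2)) ^ ((1 : ℝ) / 2) * (E (fun ω => g ω ^ 2)) ^ ((1 : ℝ) / 2) := by
  set a := E (fun ω => f ω ^ 2) with ha
  set b := E (fun ω => g ω ^ 2) with hb
  rcases eq_or_ne a 0 with ha0 | ha0
  · have hf0 : E (fun ω => f ω ^ 2) = 0 := by rw [← ha]; exact ha0
    rw [Ezero E hmono hcsub f g hf0]
    exact zero_le
  rcases eq_or_ne b 0 with hb0 | hb0
  · have : E (fun ω => f ω * g ω) = 0 := by
      have := Ezero E hmono hcsub g f hb0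
      simpa [mul_comm] using this
    simp [this]
  rcases eq_or_ne a ∞ with hat | hat
  · have : a ^ ((1:ℝ)/2) * b ^ ((1:ℝ)/2) = ∞ := by
      rw [hat, ENNReal.top_rpow_of_pos (by norm_num)]
      exact ENNReal.top_mul (by simp [ENNReal.rpow_eq_zero_iff, hb0])
    rw [this]; exact le_top
  rcases eq_or_ne b ∞ with hbt | hbt
  · have : a ^ ((1:ℝ)/2) * b ^ ((1:ℝ)/2) = ∞ := by
      rw [hbt, ENNReal.top_rpow_of_pos (by norm_num)]
      exact ENNReal.mul_top (by simp [ENNReal.rpow_eq_zero_iff, ha0])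
    rw [this]; exact le_top
  -- main case
  have hsa0 : a ^ ((1:ℝ)/2) ≠ 0 := by simp [ENNReal.rpow_eq_zero_iff, ha0, hat]
  have hsat : a ^ ((1:ℝ)/2) ≠ ∞ := by simp [ENNReal.rpow_eq_top_iff, ha0, hat]
  have hsb0 : b ^ ((1:ℝ)/2) ≠ 0 := by simp [ENNReal.rpow_eq_zero_iff, hb0, hbt]
  have hsbt : b ^ ((1:ℝ)/2) ≠ ∞ := by simp [ENNReal.rpow_eq_top_iff, hb0, hbt]
  set t : ℝ≥0∞ := b ^ ((1:ℝ)/2) * (a ^ ((1:ℝ)/2))⁻¹ with htdef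
  have ht0 : t ≠ 0 := by
    rw [htdef]
    exact mul_ne_zero hsb0 (ENNReal.inv_ne_zero.mpr hsat)
  have htt : t ≠ ∞ := by
    rw [htdef]
    exact ENNReal.mul_ne_top hsbt (ENNReal.inv_ne_top.mpr hsa0)
  have hEz : E (fun _ => (0:ℝ≥0∞)) = 0 := le_antisymm (hconst 0) zero_le
  -- family
  set h : ℕ → Ω → ℝ≥0∞ := fun n => match n with
    | 0 => fun ω => 2⁻¹ * t * f ω ^ 2
    | 1 => fun ω => 2⁻¹ * t⁻¹ * g ω ^ 2
    | _ => fun _ => 0 with hhdef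
  have hsum : ∀ ω, ∑' n, h n ω = 2⁻¹ * t * f ω ^ 2 + 2⁻¹ * t⁻¹ * g ω ^ 2 := by
    intro ω
    rw [tsum_eq_sum (s := {0, 1}) (by
      intro n hn
      match n with
      | 0 => simp at hn
      | 1 => simp at hn
      | (k+2) => rfl)]
    simp [hhdef]
  have step1 : E (fun ω => f ω * g ω) ≤ E (fun ω => ∑' n, h n ω) := by
    apply hmono
    intro ω
    rw [hsum ω]
    exact amgm_ennreal t (f ω) (g ω) ht0 htt
  have hEsum : ∑' n, E (h n) = 2⁻¹ * t * a + 2⁻¹ * t⁻¹ * b := by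
    rw [tsum_eq_sum (s := {0, 1}) (by
      intro n hn
      match n with
      | 0 => simp at hn
      | 1 => simp at hn
      | (k+2) => exact hEz)]
    have e0 : E (h 0) = 2⁻¹ * t * a :=
      hhom (2⁻¹ * t) (pos_iff_ne_zero.mpr (mul_ne_zero (by norm_num) ht0))
        (ENNReal.mul_ne_top (by simp) htt) (fun ω => f ω ^ 2)
    have e1 : E (h 1) = 2⁻¹ * t⁻¹ * b :=
      hhom (2⁻¹ * t⁻¹) (pos_iff_ne_zero.mpr (mul_ne_zero (by norm_num) (ENNReal.inv_ne_zero.mpr htt)))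
        (ENNReal.mul_ne_top (by simp) (ENNReal.inv_ne_top.mpr ht0)) (fun ω => g ω ^ 2)
    simp [e0, e1]
  have step2 : E (fun ω => ∑' n, h n ω) ≤ 2⁻¹ * t * a + 2⁻¹ * t⁻¹ * b :=
    (hcsub h).trans_eq hEsum
  have harith : 2⁻¹ * t * a + 2⁻¹ * t⁻¹ * b = a ^ ((1:ℝ)/2) * b ^ ((1:ℝ)/2) := by
    have haa : a ^ ((1:ℝ)/2) * a ^ ((1:ℝ)/2) = a := by
      rw [← ENNReal.rpow_add _ _ ha0 hat]; norm_num
    have hbb : b ^ ((1:ℝ)/2) * b ^ ((1:ℝ)/2) = b := by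
      rw [← ENNReal.rpow_add _ _ hb0 hbt]; norm_num
    have hinva : (a ^ ((1:ℝ)/2))⁻¹ * a = a ^ ((1:ℝ)/2) := by
      calc (a ^ ((1:ℝ)/2))⁻¹ * a = a ^ (-(1/2:ℝ)) * a ^ (1:ℝ) := by
            rw [ENNReal.rpow_neg, ENNReal.rpow_one]
        _ = a ^ (-(1/2:ℝ) + 1) := (ENNReal.rpow_add _ _ ha0 hat).symm
        _ = a ^ ((1:ℝ)/2) := by norm_num
    have hinvb : (b ^ ((1:ℝ)/2))⁻¹ * b = b ^ ((1:ℝ)/2) := by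
      calc (b ^ ((1:ℝ)/2))⁻¹ * b = b ^ (-(1/2:ℝ)) * b ^ (1:ℝ) := by
            rw [ENNReal.rpow_neg, ENNReal.rpow_one]
        _ = b ^ (-(1/2:ℝ) + 1) := (ENNReal.rpow_add _ _ hb0 hbt).symm
        _ = b ^ ((1:ℝ)/2) := by norm_num
    have hta : t * a = b ^ ((1:ℝ)/2) * a ^ ((1:ℝ)/2) := by
      rw [htdef, mul_assoc, hinva]
    have htinv : t⁻¹ = a ^ ((1:ℝ)/2) * (b ^ ((1:ℝ)/2))⁻¹ := by
      rw [htdef, ENNReal.mul_inv (Or.inl hsb0) (Or.inl hsbt), inv_inv, mul_comm]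
    have htb : t⁻¹ * b = a ^ ((1:ℝ)/2) * b ^ ((1:ℝ)/2) := by
      rw [htinv, mul_assoc, hinvb]
    rw [mul_assoc, hta, mul_assoc, htb, mul_comm (b ^ ((1:ℝ)/2)), ← add_mul,
      ENNReal.inv_two_add_inv_two, one_mul]
  calc E (fun ω => f ω * g ω) ≤ 2⁻¹ * t * a + 2⁻¹ * t⁻¹ * b := step1.trans step2
    _ = _ := harith

/-- Cauchy–Schwarz inequality for an outer-measure-like functional `E`
(Proposition 3.1): for `X, Y : Ω → [-∞,∞]`,
`E(|X|·|Y|) ≤ E(X²)^{1/2} · E(Y²)^{1/2}`. -/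
theorem cauchy_schwarz_for_outer_functional {Ω : Type*}
    (E : (Ω → ℝ≥0∞) → ℝ≥0∞)
    (hmono : ∀ X Y : Ω → ℝ≥0∞, (∀ ω, X ω ≤ Y ω) → E X ≤ E Y)
    (hcsub : ∀ X : ℕ → Ω → ℝ≥0∞, E (fun ω => ∑' n, X n ω) ≤ ∑' n, E (X n))
    (hhom : ∀ (c : ℝ≥0∞), 0 < c → c ≠ ∞ → ∀ X : Ω → ℝ≥0∞,
      E (fun ω => c * X ω) = c * E X)
    (hconst : ∀ c : ℝ≥0∞, E (fun _ => c) ≤ c)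
    (X Y : Ω → EReal) :
    E (fun ω => (X ω).abs * (Y ω).abs) ≤
      (E (fun ω => (X ω).abs ^ 2)) ^ ((1 : ℝ) / 2) *
        (E (fun ω => (Y ω).abs ^ 2)) ^ ((1 : ℝ) / 2) := by
  exact cs_key E hmono hcsub hhom hconst (fun ω => (X ω).abs) (fun ω => (Y ω).abs)
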